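/- Let a, b ∈ 𝔽_q^× and c ∈ ℂ^×. If Kl_{ta}^n(ψ; b_1,…,b_n) = c · Kl_{tb}^n(ψ; b_1,…,b_n) for every t ∈ 𝔽_q^×, then c = 1 and a = b. -/

import Mathlib

/-- The generalized Kloosterman sum Kl_a^n(ψ; b₁, …, b_n)
= ∑_{x₁^{b₁} ⋯ x_n^{b_n} = a} ψ(x₁ + ⋯ + x_n). -/
noncomputable def Kl {F : Type*} [Field F] [Fintype F] [DecidableEq F]
    (ψ : AddChar F ℂ) (n : ℕ) (b : Fin n → ℕ) (a : F) : ℂ :=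
  ∑ x ∈ Finset.univ.filter (fun x : Fin n → F => ∏ i, x i ^ b i = a), ψ (∑ i, x i)

open Finset in
lemma kl_char_sum {F : Type*} [Field F] [Fintype F] [DecidableEq F]
    (ψ : AddChar F ℂ) (n : ℕ) (b : Fin n → ℕ) (hb : ∀ i, 0 < b i)
    (χ : MulChar F ℂ) :
    ∑ t : Fˣ, χ (t : F) * Kl ψ n b (t : F) = ∏ i, gaussSum (χ ^ b i) ψ := by
  have h1 : ∑ t : Fˣ, χ (t : F) * Kl ψ n b (t : F) = ∑ d : F, χ d * Kl ψ n b d := by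
    refine Fintype.sum_of_injective (fun t : Fˣ => (t : F)) Units.val_injective _ _
      (fun d hd => ?_) (fun t => rfl)
    have : ¬ IsUnit d := by
      rintro ⟨u, rfl⟩; exact hd ⟨u, rfl⟩
    rw [χ.map_nonunit this, zero_mul]
  rw [h1]
  have h2 : ∀ d : F, χ d * Kl ψ n b d
      = ∑ x ∈ univ.filter (fun x : Fin n → F => ∏ i, x i ^ b i = d),
          χ (∏ i, x i ^ b i) * ψ (∑ i, x i) := by
    intro d
    rw [Kl, mul_sum]
    refine sum_congr rfl fun x hx => ?_
    rw [(mem_filter.1 hx).2]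
  simp_rw [h2]
  rw [Finset.sum_fiberwise (g := fun x : Fin n → F => ∏ i, x i ^ b i)
    (f := fun x : Fin n → F => χ (∏ i, x i ^ b i) * ψ (∑ i, x i))]
  have h3 : ∀ x : Fin n → F, χ (∏ i, x i ^ b i) * ψ (∑ i, x i)
      = ∏ i, (χ ^ b i) (x i) * ψ (x i) := by
    intro x
    rw [map_prod, prod_mul_distrib]
    congr 1
    · exact Finset.prod_congr rfl fun i _ => by
        rw [map_pow, MulChar.pow_apply' _ (hb i).ne']
    · induction (univ : Finset (Fin n)) using Finset.cons_induction with
      | empty => simp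
      | cons i s hi ih => rw [sum_cons, prod_cons, AddChar.map_add_eq_mul, ih]
  simp_rw [h3]
  rw [show (∏ i, gaussSum (χ ^ b i) ψ)
      = ∑ x ∈ Fintype.piFinset (fun _ : Fin n => (univ : Finset F)),
          ∏ i, (χ ^ b i) (x i) * ψ (x i) from Finset.prod_univ_sum _ _,
    Fintype.piFinset_univ]

open Finset in
lemma kl_char_sum_shift {F : Type*} [Field F] [Fintype F] [DecidableEq F]
    (ψ : AddChar F ℂ) (n : ℕ) (b : Fin n → ℕ) (hb : ∀ i, 0 < b i)
    (χ : MulChar F ℂ) (a : Fˣ) :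
    ∑ t : Fˣ, χ (t : F) * Kl ψ n b ((t * a : Fˣ) : F)
      = χ ((a⁻¹ : Fˣ) : F) * ∏ i, gaussSum (χ ^ b i) ψ := by
  rw [← kl_char_sum ψ n b hb χ, mul_sum]
  refine Fintype.sum_equiv (Equiv.mulRight a) _ _ fun t => ?_
  simp only [Equiv.coe_mulRight]
  rw [← mul_assoc, ← map_mul]
  congr 2
  push_cast
  field_simp

lemma gauss_prod_ne_zero {F : Type*} [Field F] [Fintype F] [DecidableEq F]
    (ψ : AddChar F ℂ) (hψ : ψ ≠ 1) (n : ℕ) (b : Fin n → ℕ)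
    (χ : MulChar F ℂ) : (∏ i, gaussSum (χ ^ b i) ψ) ≠ 0 := by
  have hprim : ψ.IsPrimitive := AddChar.IsPrimitive.of_ne_one hψ
  refine Finset.prod_ne_zero_iff.2 fun i _ => ?_
  by_cases h1 : χ ^ b i = 1
  · rw [h1]
    have : gaussSum (1 : MulChar F ℂ) ψ = -1 := by
      have hs : ∑ y : F, ψ y = 0 :=
        AddChar.sum_eq_zero_iff_ne_zero.2 (by rwa [← AddChar.one_eq_zero])
      rw [← Finset.add_sum_erase _ (fun y => ψ y) (Finset.mem_univ (0 : F))] at hs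
      have key : ∑ y ∈ Finset.univ.erase (0 : F), ψ y = -1 := by
        have h0 : ψ (0 : F) = 1 := ψ.map_zero_eq_one
        rw [h0] at hs
        linear_combination hs
      have : gaussSum (1 : MulChar F ℂ) ψ = ∑ y ∈ Finset.univ.erase (0 : F), ψ y := by
        rw [gaussSum, ← Finset.add_sum_erase _ _ (Finset.mem_univ (0 : F))]
        have hz : (1 : MulChar F ℂ) 0 * ψ 0 = 0 := by
          rw [MulChar.map_nonunit _ (by simp : ¬ IsUnit (0 : F)), zero_mul]
        rw [hz, zero_add]
        refine Finset.sum_congr rfl fun y hy => ?_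
        rw [MulChar.one_apply (isUnit_iff_ne_zero.2 (Finset.ne_of_mem_erase hy)), one_mul]
      rw [this, key]
    rw [this]; norm_num
  · exact gaussSum_ne_zero_of_nontrivial
      (Nat.cast_ne_zero.2 Fintype.card_ne_zero) h1 hprim

/-- If Kl_{ta}^n(ψ; b₁,…,b_n) = c · Kl_{tb}^n(ψ; b₁,…,b_n) for every t ∈ 𝔽_q^×,
then c = 1 and a = b. -/
theorem stmt7 {F : Type*} [Field F] [Fintype F] [DecidableEq F]
    (ψ : AddChar F ℂ) (hψ : ψ ≠ 1) (n : ℕ) (hn : 0 < n)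
    (b : Fin n → ℕ) (hb : ∀ i, 0 < b i)
    (a a' : Fˣ) (c : ℂ) (hc : c ≠ 0)
    (h : ∀ t : Fˣ, Kl ψ n b ((t * a : Fˣ) : F) = c * Kl ψ n b ((t * a' : Fˣ) : F)) :
    c = 1 ∧ a = a' := by
  have key : ∀ χ : MulChar F ℂ, χ ((a⁻¹ : Fˣ) : F) = c * χ ((a'⁻¹ : Fˣ) : F) := by
    intro χ
    have h1 := kl_char_sum_shift ψ n b hb χ a
    have h2 := kl_char_sum_shift ψ n b hb χ a'
    have heq : ∑ t : Fˣ, χ (t : F) * Kl ψ n b ((t * a : Fˣ) : F)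
        = c * ∑ t : Fˣ, χ (t : F) * Kl ψ n b ((t * a' : Fˣ) : F) := by
      rw [Finset.mul_sum]
      exact Finset.sum_congr rfl fun t _ => by rw [h t]; ring
    rw [h1, h2, ← mul_assoc] at heq
    exact mul_right_cancel₀ (gauss_prod_ne_zero ψ hψ n b χ) heq
  have hc1 : c = 1 := by
    have h1 := key 1
    rwa [MulChar.one_apply_coe, MulChar.one_apply_coe, mul_one, eq_comm] at h1
  refine ⟨hc1, ?_⟩
  rw [hc1] at key
  simp only [one_mul] at key
  by_contra hne
  have hne' : ((a' * a⁻¹ : Fˣ) : F) ≠ 1 := by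
    intro hh
    apply hne
    have : (a' * a⁻¹ : Fˣ) = 1 := Units.ext (by simpa using hh)
    rw [mul_inv_eq_one] at this
    exact this.symm
  haveI : NeZero (((Monoid.exponent Fˣ : ℕ) : ℂ)) :=
    ⟨Nat.cast_ne_zero.2 Monoid.exponent_ne_zero_of_finite⟩
  obtain ⟨χ, hχ⟩ := MulChar.exists_apply_ne_one_of_hasEnoughRootsOfUnity F ℂ hne'
  apply hχ
  have : χ ((a' * a⁻¹ : Fˣ) : F) = χ ((a' : Fˣ) : F) * χ ((a⁻¹ : Fˣ) : F) := by
    rw [← map_mul]; norm_cast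
  rw [this, key χ, ← map_mul]
  norm_cast
  rw [mul_inv_cancel]
  exact χ.map_one
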